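/- Under the unique-optimum assumption, for every ω₁ > 0 and ω₂ > 0, the condition number of the reweighted LP min (ω₁c)ᵀx s.t. Ax = ω₂b, x ≥ 0 satisfies Φ_{ω₁,ω₂} = (ω₂‖x*‖₁ + ω₁‖s*‖₁) · max{1/(ω₁ζ_p), 1/(ω₂ζ_d)}. -/

import Mathlib

open Matrix
open scoped BigOperators

noncomputable section

namespace LPPaper

/-- Euclidean norm of a finite real vector. -/
def enorm {k : ℕ} (v : Fin k → ℝ) : ℝ := Real.sqrt (∑ i, (v i) ^ 2)

/-- ℓ₁ norm of a finite real vector. -/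
def l1 {k : ℕ} (v : Fin k → ℝ) : ℝ := ∑ i, |v i|

/-- Spectral norm (operator 2-norm w.r.t. Euclidean norms) of a real matrix. -/
def specNorm {α β : Type*} [Fintype α] [Fintype β] [DecidableEq β] (M : Matrix α β ℝ) : ℝ :=
  ‖LinearMap.toContinuousLinearMap (Matrix.toEuclideanLin M)‖

variable {m n : ℕ}

/-- Embedding of basic indices (the first `m` coordinates). -/
def bIdx (hmn : m ≤ n) (i : Fin m) : Fin n := Fin.castLE hmn i

/-- Embedding of nonbasic indices (the last `n - m` coordinates). -/
def nIdx (hmn : m ≤ n) (j : Fin (n - m)) : Fin n := ⟨m + j.val, by have := j.isLt; omega⟩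

/-- The basis matrix `B`: the first `m` columns of `A`. -/
def Bmat (hmn : m ≤ n) (A : Matrix (Fin m) (Fin n) ℝ) : Matrix (Fin m) (Fin m) ℝ :=
  Matrix.of fun i j => A i (bIdx hmn j)

/-- The nonbasic matrix `N`: the last `n - m` columns of `A`. -/
def Nmat (hmn : m ≤ n) (A : Matrix (Fin m) (Fin n) ℝ) : Matrix (Fin m) (Fin (n - m)) ℝ :=
  Matrix.of fun i j => A i (nIdx hmn j)

/-- The simplex tableau `B⁻¹N` at the optimal basis. -/
def BN (hmn : m ≤ n) (A : Matrix (Fin m) (Fin n) ℝ) : Matrix (Fin m) (Fin (n - m)) ℝ :=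
  (Bmat hmn A)⁻¹ * Nmat hmn A

/-- `q := Aᵀ(AAᵀ)⁻¹ b`. -/
def qvec (A : Matrix (Fin m) (Fin n) ℝ) (b : Fin m → ℝ) : Fin n → ℝ :=
  Aᵀ *ᵥ ((A * Aᵀ)⁻¹ *ᵥ b)

/-- Primal feasibility: `Ax = b`, `x ≥ 0`. -/
def PrimalFeasible (A : Matrix (Fin m) (Fin n) ℝ) (b : Fin m → ℝ) (x : Fin n → ℝ) : Prop :=
  A *ᵥ x = b ∧ ∀ i, 0 ≤ x i

/-- Dual feasibility: `Aᵀy + s = c`, `s ≥ 0`. -/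
def DualFeasible (A : Matrix (Fin m) (Fin n) ℝ) (c : Fin n → ℝ) (y : Fin m → ℝ)
    (s : Fin n → ℝ) : Prop :=
  Aᵀ *ᵥ y + s = c ∧ ∀ i, 0 ≤ s i

/-- The unique-optimum assumption (Assumption 1 of the paper), with the optimal basis being
(after a permutation of the variables) the set of the first `m` indices: the rows of `A` are
linearly independent, `x*` is the unique primal optimal solution, `(y*, s*)` the unique dual
optimal solution, the basis matrix `B` is invertible, `x*ᵢ > 0` exactly for the first `m`
indices and `s*ᵢ > 0` exactly for the remaining indices. -/
structure UniqueOpt (hmn : m ≤ n) (A : Matrix (Fin m) (Fin n) ℝ) (b : Fin m → ℝ)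
    (c : Fin n → ℝ) (xstar : Fin n → ℝ) (ystar : Fin m → ℝ) (sstar : Fin n → ℝ) : Prop where
  rows_indep : LinearIndependent ℝ (fun i => A i)
  primal_feas : PrimalFeasible A b xstar
  primal_opt : ∀ x, PrimalFeasible A b x → c ⬝ᵥ xstar ≤ c ⬝ᵥ x
  primal_uniq : ∀ x, PrimalFeasible A b x → c ⬝ᵥ x = c ⬝ᵥ xstar → x = xstar
  dual_feas : DualFeasible A c ystar sstar
  dual_opt : ∀ y s, DualFeasible A c y s → b ⬝ᵥ y ≤ b ⬝ᵥ ystar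
  dual_uniq : ∀ y s, DualFeasible A c y s → b ⬝ᵥ y = b ⬝ᵥ ystar → y = ystar ∧ s = sstar
  basis_isUnit : IsUnit (Bmat hmn A).det
  xstar_supp : ∀ i : Fin n, 0 < xstar i ↔ (i : ℕ) < m
  sstar_supp : ∀ i : Fin n, 0 < sstar i ↔ m ≤ (i : ℕ)

/-- The `max` factor appearing in the geometric condition number `Φ`. -/
def PhiFactor (hmn : m ≤ n) (A : Matrix (Fin m) (Fin n) ℝ) (xstar sstar : Fin n → ℝ) : ℝ :=
  max (⨆ j : Fin (n - m),
        Real.sqrt ((∑ i, (BN hmn A i j) ^ 2) + 1) / sstar (nIdx hmn j))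
      (⨆ i : Fin m,
        Real.sqrt ((∑ j, (BN hmn A i j) ^ 2) + 1) / xstar (bIdx hmn i))

/-- The geometric condition number `Φ`. -/
def Phi (hmn : m ≤ n) (A : Matrix (Fin m) (Fin n) ℝ) (xstar sstar : Fin n → ℝ) : ℝ :=
  (l1 xstar + l1 sstar) * PhiFactor hmn A xstar sstar


/-- The first `m` indices form the unique optimal basis of the LP `(A, b, c)`:
there are (unique, nondegenerate) primal and dual optimal solutions whose supports are
exactly the first `m` indices and its complement, respectively. -/
def UniqueOptBasis (hmn : m ≤ n) (A : Matrix (Fin m) (Fin n) ℝ) (b : Fin m → ℝ)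
    (c : Fin n → ℝ) : Prop :=
  ∃ x y s, UniqueOpt hmn A b c x y s

/-- Stability of the optimal basis under perturbations of the cost vector `c`. -/
def zetaP (hmn : m ≤ n) (A : Matrix (Fin m) (Fin n) ℝ) (b : Fin m → ℝ) (c : Fin n → ℝ) : ℝ :=
  sInf {t | ∃ dc : Fin n → ℝ, t = enorm dc ∧ ¬ UniqueOptBasis hmn A b (c + dc)}

/-- Stability of the optimal basis under perturbations of the right-hand side `b`,
measured in the `(AAᵀ)⁻¹`-norm. -/
def zetaD (hmn : m ≤ n) (A : Matrix (Fin m) (Fin n) ℝ) (b : Fin m → ℝ) (c : Fin n → ℝ) : ℝ :=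
  sInf {t | ∃ db : Fin m → ℝ, t = Real.sqrt (db ⬝ᵥ ((A * Aᵀ)⁻¹ *ᵥ db)) ∧
    ¬ UniqueOptBasis hmn A (b + db) c}

/-! ### Auxiliary development -/

section Aux

variable {m n : ℕ}

lemma nIdx_val (hmn : m ≤ n) (j : Fin (n - m)) : ((nIdx hmn j : Fin n) : ℕ) = m + j := rfl

lemma bIdx_val (hmn : m ≤ n) (i : Fin m) : ((bIdx hmn i : Fin n) : ℕ) = i := rfl

lemma nIdx_injective (hmn : m ≤ n) : Function.Injective (nIdx hmn) := by
  intro a b hab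
  have : m + (a : ℕ) = m + b := congrArg Fin.val hab
  exact Fin.ext (by omega)

lemma bIdx_injective (hmn : m ≤ n) : Function.Injective (bIdx hmn) := by
  intro a b hab
  have : ((bIdx hmn a : Fin n) : ℕ) = ((bIdx hmn b : Fin n) : ℕ) := congrArg Fin.val hab
  exact Fin.ext this

/-- Every index of `Fin n` is basic or nonbasic. -/
lemma idx_cases (hmn : m ≤ n) (k : Fin n) :
    (∃ i, k = bIdx hmn i) ∨ (∃ j, k = nIdx hmn j) := by
  by_cases hk : (k : ℕ) < m
  · exact Or.inl ⟨⟨k, hk⟩, Fin.ext rfl⟩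
  · refine Or.inr ⟨⟨(k : ℕ) - m, by have := k.isLt; omega⟩, Fin.ext ?_⟩
    simp [nIdx_val]; omega

lemma sum_split (hmn : m ≤ n) (f : Fin n → ℝ) :
    ∑ k, f k = (∑ i : Fin m, f (bIdx hmn i)) + ∑ j : Fin (n - m), f (nIdx hmn j) := by
  have hn : m + (n - m) = n := by omega
  have h1 : ∑ k, f k = ∑ k : Fin (m + (n - m)), f (Fin.cast hn k) :=
    (Fintype.sum_equiv (finCongr hn) _ _ (fun k => rfl)).symm
  rw [h1, Fin.sum_univ_add]
  congr 1

end Aux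
section Aux2

variable {m n : ℕ}

/-- Reduced cost of nonbasic index `j` for cost vector `c'`. -/
def redc (hmn : m ≤ n) (A : Matrix (Fin m) (Fin n) ℝ) (c' : Fin n → ℝ) (j : Fin (n - m)) : ℝ :=
  c' (nIdx hmn j) - ∑ i, BN hmn A i j * c' (bIdx hmn i)

lemma mulVec_split (hmn : m ≤ n) (A : Matrix (Fin m) (Fin n) ℝ) (v : Fin n → ℝ) :
    A *ᵥ v = (Bmat hmn A) *ᵥ (fun i => v (bIdx hmn i))
      + (Nmat hmn A) *ᵥ (fun j => v (nIdx hmn j)) := by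
  funext i
  have := sum_split hmn (fun k => A i k * v k)
  simpa [Matrix.mulVec, dotProduct, Bmat, Nmat, Pi.add_apply] using this

lemma dotProduct_split (hmn : m ≤ n) (u v : Fin n → ℝ) :
    u ⬝ᵥ v = (∑ i, u (bIdx hmn i) * v (bIdx hmn i)) + ∑ j, u (nIdx hmn j) * v (nIdx hmn j) :=
  sum_split hmn _

variable (hmn : m ≤ n) (A : Matrix (Fin m) (Fin n) ℝ)

lemma Binv_mul_B (hB : IsUnit (Bmat hmn A).det) :
    (Bmat hmn A)⁻¹ * Bmat hmn A = 1 := Matrix.nonsing_inv_mul _ hB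

lemma Bt_inv : ((Bmat hmn A)ᵀ)⁻¹ = ((Bmat hmn A)⁻¹)ᵀ := (Matrix.transpose_nonsing_inv _).symm

lemma BNt_eq : (BN hmn A)ᵀ = (Nmat hmn A)ᵀ * ((Bmat hmn A)ᵀ)⁻¹ := by
  rw [BN, Matrix.transpose_mul, Matrix.transpose_nonsing_inv]

/-- `(Aᵀ *ᵥ y)` at a basic index. -/
lemma transposeMulVec_bIdx (y : Fin m → ℝ) (i : Fin m) :
    (Aᵀ *ᵥ y) (bIdx hmn i) = ((Bmat hmn A)ᵀ *ᵥ y) i := by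
  simp [Matrix.mulVec, dotProduct, Matrix.transpose_apply, Bmat]

/-- `(Aᵀ *ᵥ y)` at a nonbasic index. -/
lemma transposeMulVec_nIdx (y : Fin m → ℝ) (j : Fin (n - m)) :
    (Aᵀ *ᵥ y) (nIdx hmn j) = ((Nmat hmn A)ᵀ *ᵥ y) j := by
  simp [Matrix.mulVec, dotProduct, Matrix.transpose_apply, Nmat]

end Aux2
section Aux3

variable {m n : ℕ}

/-- Extend a basic vector by zeros. -/
def extB (hmn : m ≤ n) (v : Fin m → ℝ) : Fin n → ℝ :=
  fun k => if hk : (k : ℕ) < m then v ⟨k, hk⟩ else 0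

/-- Extend a nonbasic vector by zeros. -/
def extN (hmn : m ≤ n) (w : Fin (n - m) → ℝ) : Fin n → ℝ :=
  fun k => if hk : (k : ℕ) < m then 0 else w ⟨(k : ℕ) - m, by have := k.isLt; omega⟩

lemma extB_bIdx (hmn : m ≤ n) (v : Fin m → ℝ) (i : Fin m) :
    extB hmn v (bIdx hmn i) = v i := by
  have hi : ((bIdx hmn i : Fin n) : ℕ) < m := i.isLt
  simp only [extB, dif_pos hi]
  congr 1

lemma extB_nIdx (hmn : m ≤ n) (v : Fin m → ℝ) (j : Fin (n - m)) :
    extB hmn v (nIdx hmn j) = 0 := by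
  have : ¬ ((nIdx hmn j : Fin n) : ℕ) < m := by simp [nIdx_val]
  simp only [extB, dif_neg this]

lemma extN_bIdx (hmn : m ≤ n) (w : Fin (n - m) → ℝ) (i : Fin m) :
    extN hmn w (bIdx hmn i) = 0 := by
  have hi : ((bIdx hmn i : Fin n) : ℕ) < m := i.isLt
  simp only [extN, dif_pos hi]

lemma extN_nIdx (hmn : m ≤ n) (w : Fin (n - m) → ℝ) (j : Fin (n - m)) :
    extN hmn w (nIdx hmn j) = w j := by
  have : ¬ ((nIdx hmn j : Fin n) : ℕ) < m := by simp [nIdx_val]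
  simp only [extN, dif_neg this]
  congr 1
  apply Fin.ext
  simp [nIdx_val]

variable (hmn : m ≤ n) (A : Matrix (Fin m) (Fin n) ℝ)

lemma sum_BN_mul (v : Fin m → ℝ) (j : Fin (n - m)) :
    ∑ i, BN hmn A i j * v i = ((BN hmn A)ᵀ *ᵥ v) j := by
  simp [Matrix.mulVec, dotProduct, Matrix.transpose_apply]

lemma dot_At (y : Fin m → ℝ) (x : Fin n → ℝ) :
    (Aᵀ *ᵥ y) ⬝ᵥ x = (A *ᵥ x) ⬝ᵥ y := by
  rw [dotProduct_comm, Matrix.dotProduct_mulVec, Matrix.vecMul_transpose,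
    dotProduct_comm]

lemma BNt_mulVec (hB : IsUnit (Bmat hmn A).det) (y : Fin m → ℝ) :
    (BN hmn A)ᵀ *ᵥ ((Bmat hmn A)ᵀ *ᵥ y) = (Nmat hmn A)ᵀ *ᵥ y := by
  have hBt : IsUnit ((Bmat hmn A)ᵀ).det := by rwa [Matrix.det_transpose]
  have hcancel : ((Bmat hmn A)ᵀ)⁻¹ *ᵥ ((Bmat hmn A)ᵀ *ᵥ y) = y := by
    rw [Matrix.mulVec_mulVec, Matrix.nonsing_inv_mul _ hBt, Matrix.one_mulVec]
  rw [BNt_eq, ← Matrix.mulVec_mulVec, hcancel]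

/-- Characterization of `UniqueOptBasis` in terms of positivity of the basic solution and
of the reduced costs. -/
lemma uob_iff (b' : Fin m → ℝ) (c' : Fin n → ℝ)
    (hind : LinearIndependent ℝ (fun i => A i)) (hB : IsUnit (Bmat hmn A).det) :
    UniqueOptBasis hmn A b' c' ↔
      (∀ i, 0 < ((Bmat hmn A)⁻¹ *ᵥ b') i) ∧ (∀ j, 0 < redc hmn A c' j) := by
  have hBt : IsUnit ((Bmat hmn A)ᵀ).det := by rwa [Matrix.det_transpose]
  constructor
  · rintro ⟨x, y, s, hu⟩
    have hxN : ∀ j, x (nIdx hmn j) = 0 := by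
      intro j
      have h1 := (hu.xstar_supp (nIdx hmn j)).mp
      have h2 := hu.primal_feas.2 (nIdx hmn j)
      have : ¬ ((nIdx hmn j : Fin n) : ℕ) < m := by simp [nIdx_val]
      by_contra hne
      exact this (h1 (lt_of_le_of_ne h2 (Ne.symm hne)))
    have hsB : ∀ i, s (bIdx hmn i) = 0 := by
      intro i
      have h1 := (hu.sstar_supp (bIdx hmn i)).mp
      have h2 := hu.dual_feas.2 (bIdx hmn i)
      have : ¬ m ≤ ((bIdx hmn i : Fin n) : ℕ) := by
        have hi := i.isLt; rw [bIdx_val]; omega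
      by_contra hne
      exact this (h1 (lt_of_le_of_ne h2 (Ne.symm hne)))
    have hsplit := mulVec_split hmn A x
    have hBxB : (Bmat hmn A) *ᵥ (fun i => x (bIdx hmn i)) = b' := by
      have hN0 : (Nmat hmn A) *ᵥ (fun j => x (nIdx hmn j)) = 0 := by
        have : (fun j => x (nIdx hmn j)) = (0 : Fin (n - m) → ℝ) := funext hxN
        rw [this, Matrix.mulVec_zero]
      have := hu.primal_feas.1
      rw [hsplit, hN0, add_zero] at this
      exact this
    have hxB : (fun i => x (bIdx hmn i)) = (Bmat hmn A)⁻¹ *ᵥ b' := by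
      rw [← hBxB, Matrix.mulVec_mulVec, Matrix.nonsing_inv_mul _ hB, Matrix.one_mulVec]
    constructor
    · intro i
      rw [← hxB]
      exact (hu.xstar_supp (bIdx hmn i)).mpr i.isLt
    · intro j
      have hfeas := hu.dual_feas.1
      have hfB : (Bmat hmn A)ᵀ *ᵥ y = fun i => c' (bIdx hmn i) := by
        funext i
        have := congrFun hfeas (bIdx hmn i)
        rw [Pi.add_apply, transposeMulVec_bIdx, hsB] at this
        simpa using this
      have hfN := congrFun hfeas (nIdx hmn j)
      rw [Pi.add_apply, transposeMulVec_nIdx] at hfN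
      have hval : redc hmn A c' j = s (nIdx hmn j) := by
        rw [redc, sum_BN_mul, ← hfB, BNt_mulVec hmn A hB, ← hfN]
        ring
      rw [hval]
      exact (hu.sstar_supp (nIdx hmn j)).mpr (by simp [nIdx_val])
  · rintro ⟨hx, hs⟩
    set xB : Fin m → ℝ := (Bmat hmn A)⁻¹ *ᵥ b' with hxBdef
    set x : Fin n → ℝ := extB hmn xB with hxdef
    set cB : Fin m → ℝ := fun i => c' (bIdx hmn i) with hcBdef
    set y : Fin m → ℝ := ((Bmat hmn A)ᵀ)⁻¹ *ᵥ cB with hydef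
    set s : Fin n → ℝ := extN hmn (fun j => redc hmn A c' j) with hsdef
    have hxb : ∀ i, x (bIdx hmn i) = xB i := fun i => extB_bIdx hmn xB i
    have hxn : ∀ j, x (nIdx hmn j) = 0 := fun j => extB_nIdx hmn xB j
    have hsb : ∀ i, s (bIdx hmn i) = 0 := fun i => extN_bIdx hmn _ i
    have hsn : ∀ j, s (nIdx hmn j) = redc hmn A c' j := fun j => extN_nIdx hmn _ j
    have hxnonneg : ∀ k, 0 ≤ x k := by
      intro k
      rcases idx_cases hmn k with ⟨i, rfl⟩ | ⟨j, rfl⟩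
      · rw [hxb]; exact le_of_lt (hx i)
      · rw [hxn]
    have hsnonneg : ∀ k, 0 ≤ s k := by
      intro k
      rcases idx_cases hmn k with ⟨i, rfl⟩ | ⟨j, rfl⟩
      · rw [hsb]
      · rw [hsn]; exact le_of_lt (hs j)
    have hBty : (Bmat hmn A)ᵀ *ᵥ y = cB := by
      rw [hydef, Matrix.mulVec_mulVec, Matrix.mul_nonsing_inv _ hBt, Matrix.one_mulVec]
    have hAx : A *ᵥ x = b' := by
      rw [mulVec_split hmn A x]
      have h1 : (fun i => x (bIdx hmn i)) = xB := funext hxb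
      have h2 : (fun j => x (nIdx hmn j)) = (0 : Fin (n - m) → ℝ) := funext hxn
      rw [h1, h2, Matrix.mulVec_zero, add_zero, hxBdef, Matrix.mulVec_mulVec,
        Matrix.mul_nonsing_inv _ hB, Matrix.one_mulVec]
    have hdualfeas : Aᵀ *ᵥ y + s = c' := by
      funext k
      rcases idx_cases hmn k with ⟨i, rfl⟩ | ⟨j, rfl⟩
      · rw [Pi.add_apply, transposeMulVec_bIdx, hBty, hsb, add_zero]
      · rw [Pi.add_apply, transposeMulVec_nIdx, hsn, redc, sum_BN_mul, ← hcBdef, ← hBty,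
          BNt_mulVec hmn A hB]
        ring
    have hcompl : s ⬝ᵥ x = 0 := by
      rw [dotProduct_split hmn]
      have h1 : ∀ i : Fin m, s (bIdx hmn i) * x (bIdx hmn i) = 0 := by
        intro i; rw [hsb]; ring
      have h2 : ∀ j : Fin (n - m), s (nIdx hmn j) * x (nIdx hmn j) = 0 := by
        intro j; rw [hxn]; ring
      rw [Finset.sum_congr rfl (fun i _ => h1 i), Finset.sum_congr rfl (fun j _ => h2 j)]
      simp
    -- key duality identity
    have hkey : ∀ x' : Fin n → ℝ, A *ᵥ x' = b' → c' ⬝ᵥ x' = b' ⬝ᵥ y + s ⬝ᵥ x' := by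
      intro x' hx'
      have : c' ⬝ᵥ x' = (Aᵀ *ᵥ y) ⬝ᵥ x' + s ⬝ᵥ x' := by
        rw [← hdualfeas]
        simp [add_dotProduct]
      rw [this, dot_At, hx', dotProduct_comm]
    have hcx : c' ⬝ᵥ x = b' ⬝ᵥ y := by
      rw [hkey x hAx, hcompl, add_zero]
    have hdot_nonneg : ∀ (u v : Fin n → ℝ), (∀ k, 0 ≤ u k) → (∀ k, 0 ≤ v k) → 0 ≤ u ⬝ᵥ v := by
      intro u v hu hv
      exact Finset.sum_nonneg fun k _ => mul_nonneg (hu k) (hv k)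
    -- key duality identity for the dual side
    have hkey' : ∀ (y' : Fin m → ℝ) (s' : Fin n → ℝ), Aᵀ *ᵥ y' + s' = c' →
        b' ⬝ᵥ y' = c' ⬝ᵥ x - s' ⬝ᵥ x := by
      intro y' s' hy'
      have : c' ⬝ᵥ x = (Aᵀ *ᵥ y') ⬝ᵥ x + s' ⬝ᵥ x := by
        rw [← hy']; simp [add_dotProduct]
      rw [this, dot_At, hAx, dotProduct_comm]
      ring
    refine ⟨x, y, s, ?_⟩
    refine ⟨hind, ⟨hAx, hxnonneg⟩, ?_, ?_, ⟨hdualfeas, hsnonneg⟩, ?_, ?_, hB, ?_, ?_⟩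
    · -- primal_opt
      intro x' hx'
      rw [hcx, hkey x' hx'.1]
      have := hdot_nonneg s x' hsnonneg hx'.2
      linarith
    · -- primal_uniq
      intro x' hx' heq
      have hsx' : s ⬝ᵥ x' = 0 := by
        have := hkey x' hx'.1
        rw [heq, hcx] at this
        linarith
      have hterm : ∀ k, s k * x' k = 0 := by
        intro k
        have hall := (Finset.sum_eq_zero_iff_of_nonneg
          (fun k _ => mul_nonneg (hsnonneg k) (hx'.2 k))).mp hsx'
        exact hall k (Finset.mem_univ k)
      have hx'N : ∀ j, x' (nIdx hmn j) = 0 := by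
        intro j
        have := hterm (nIdx hmn j)
        rw [hsn] at this
        rcases mul_eq_zero.mp this with h | h
        · exact absurd h (ne_of_gt (hs j))
        · exact h
      have hBx'B : (Bmat hmn A) *ᵥ (fun i => x' (bIdx hmn i)) = b' := by
        have hN0 : (Nmat hmn A) *ᵥ (fun j => x' (nIdx hmn j)) = 0 := by
          have : (fun j => x' (nIdx hmn j)) = (0 : Fin (n - m) → ℝ) := funext hx'N
          rw [this, Matrix.mulVec_zero]
        have := hx'.1
        rw [mulVec_split hmn A x', hN0, add_zero] at this
        exact this
      have hx'B : (fun i => x' (bIdx hmn i)) = xB := by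
        rw [hxBdef, ← hBx'B, Matrix.mulVec_mulVec, Matrix.nonsing_inv_mul _ hB,
          Matrix.one_mulVec]
      funext k
      rcases idx_cases hmn k with ⟨i, rfl⟩ | ⟨j, rfl⟩
      · rw [hxb, ← congrFun hx'B i]
      · rw [hxn, hx'N]
    · -- dual_opt
      intro y' s' hd
      rw [hkey' y' s' hd.1, ← hcx]
      have := hdot_nonneg s' x (fun k => hd.2 k) hxnonneg
      linarith
    · -- dual_uniq
      intro y' s' hd heq
      have hs'x : s' ⬝ᵥ x = 0 := by
        have := hkey' y' s' hd.1
        rw [heq, ← hcx] at this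
        linarith
      have hterm : ∀ k, s' k * x k = 0 := by
        intro k
        have hall := (Finset.sum_eq_zero_iff_of_nonneg
          (fun k _ => mul_nonneg (hd.2 k) (hxnonneg k))).mp hs'x
        exact hall k (Finset.mem_univ k)
      have hs'B : ∀ i, s' (bIdx hmn i) = 0 := by
        intro i
        have := hterm (bIdx hmn i)
        rw [hxb] at this
        rcases mul_eq_zero.mp this with h | h
        · exact h
        · exact absurd h (ne_of_gt (hx i))
      have hBty' : (Bmat hmn A)ᵀ *ᵥ y' = cB := by
        funext i
        have := congrFun hd.1 (bIdx hmn i)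
        rw [Pi.add_apply, transposeMulVec_bIdx, hs'B, add_zero] at this
        exact this
      have hy' : y' = y := by
        have : ((Bmat hmn A)ᵀ)⁻¹ *ᵥ ((Bmat hmn A)ᵀ *ᵥ y') = ((Bmat hmn A)ᵀ)⁻¹ *ᵥ cB := by
          rw [hBty']
        rwa [Matrix.mulVec_mulVec, Matrix.nonsing_inv_mul _ hBt, Matrix.one_mulVec,
          ← hydef] at this
      refine ⟨hy', ?_⟩
      funext k
      have h1 := congrFun hd.1 k
      have h2 := congrFun hdualfeas k
      rw [Pi.add_apply] at h1 h2
      rw [hy'] at h1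
      linarith
    · -- xstar_supp
      intro k
      constructor
      · intro hpos
        by_contra hk
        rcases idx_cases hmn k with ⟨i, rfl⟩ | ⟨j, rfl⟩
        · exact hk i.isLt
        · rw [hxn] at hpos; exact lt_irrefl 0 hpos
      · intro hk
        have : k = bIdx hmn ⟨(k : ℕ), hk⟩ := Fin.ext rfl
        rw [this, hxb]
        exact hx _
    · -- sstar_supp
      intro k
      constructor
      · intro hpos
        by_contra hk
        push_neg at hk
        have : k = bIdx hmn ⟨(k : ℕ), hk⟩ := Fin.ext rfl
        rw [this, hsb] at hpos
        exact lt_irrefl 0 hpos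
      · intro hk
        rcases idx_cases hmn k with ⟨i, rfl⟩ | ⟨j, rfl⟩
        · rw [bIdx_val] at hk; omega
        · rw [hsn]; exact hs j

end Aux3
section Aux4

variable {m n : ℕ} (hmn : m ≤ n) (A : Matrix (Fin m) (Fin n) ℝ)

lemma enorm_nonneg {k : ℕ} (v : Fin k → ℝ) : 0 ≤ enorm v := Real.sqrt_nonneg _

lemma enorm_smul {k : ℕ} (t : ℝ) (v : Fin k → ℝ) :
    enorm (fun i => t * v i) = |t| * enorm v := by
  unfold enorm
  rw [← Real.sqrt_sq_eq_abs, ← Real.sqrt_mul (sq_nonneg t), Finset.mul_sum]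
  congr 1
  exact Finset.sum_congr rfl fun i _ => by ring

lemma enorm_sq {k : ℕ} (v : Fin k → ℝ) : (enorm v) ^ 2 = ∑ i, (v i) ^ 2 :=
  Real.sq_sqrt (Finset.sum_nonneg fun i _ => sq_nonneg _)

variable {b : Fin m → ℝ} {c xstar : Fin n → ℝ} {ystar : Fin m → ℝ} {sstar : Fin n → ℝ}

/-- At the optimum, the basic part of `x*` is `B⁻¹ b`. -/
lemma xstar_eq (h : UniqueOpt hmn A b c xstar ystar sstar) :
    (fun i => xstar (bIdx hmn i)) = (Bmat hmn A)⁻¹ *ᵥ b := by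
  have hxN : ∀ j, xstar (nIdx hmn j) = 0 := by
    intro j
    have h1 := (h.xstar_supp (nIdx hmn j)).mp
    have h2 := h.primal_feas.2 (nIdx hmn j)
    have : ¬ ((nIdx hmn j : Fin n) : ℕ) < m := by simp [nIdx_val]
    by_contra hne
    exact this (h1 (lt_of_le_of_ne h2 (Ne.symm hne)))
  have hBxB : (Bmat hmn A) *ᵥ (fun i => xstar (bIdx hmn i)) = b := by
    have hN0 : (Nmat hmn A) *ᵥ (fun j => xstar (nIdx hmn j)) = 0 := by
      have : (fun j => xstar (nIdx hmn j)) = (0 : Fin (n - m) → ℝ) := funext hxN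
      rw [this, Matrix.mulVec_zero]
    have := h.primal_feas.1
    rw [mulVec_split hmn A xstar, hN0, add_zero] at this
    exact this
  rw [← hBxB, Matrix.mulVec_mulVec, Matrix.nonsing_inv_mul _ h.basis_isUnit,
    Matrix.one_mulVec]

/-- At the optimum, the reduced costs are the nonbasic part of `s*`. -/
lemma redc_eq (h : UniqueOpt hmn A b c xstar ystar sstar) (j : Fin (n - m)) :
    redc hmn A c j = sstar (nIdx hmn j) := by
  have hsB : ∀ i, sstar (bIdx hmn i) = 0 := by
    intro i
    have h1 := (h.sstar_supp (bIdx hmn i)).mp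
    have h2 := h.dual_feas.2 (bIdx hmn i)
    have : ¬ m ≤ ((bIdx hmn i : Fin n) : ℕ) := by
      have hi := i.isLt; rw [bIdx_val]; omega
    by_contra hne
    exact this (h1 (lt_of_le_of_ne h2 (Ne.symm hne)))
  have hfeas := h.dual_feas.1
  have hfB : (Bmat hmn A)ᵀ *ᵥ ystar = fun i => c (bIdx hmn i) := by
    funext i
    have := congrFun hfeas (bIdx hmn i)
    rw [Pi.add_apply, transposeMulVec_bIdx, hsB] at this
    simpa using this
  have hfN := congrFun hfeas (nIdx hmn j)
  rw [Pi.add_apply, transposeMulVec_nIdx] at hfN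
  rw [redc, sum_BN_mul, ← hfB, BNt_mulVec hmn A h.basis_isUnit, ← hfN]
  ring

/-- The linear functional whose inner product with `Δc` is the change of the `j`-th reduced
cost. -/
def gvec (hmn : m ≤ n) (A : Matrix (Fin m) (Fin n) ℝ) (j : Fin (n - m)) : Fin n → ℝ :=
  fun k => if hk : (k : ℕ) < m then -(BN hmn A ⟨k, hk⟩ j) else if k = nIdx hmn j then 1 else 0

lemma gvec_bIdx (j : Fin (n - m)) (i : Fin m) :
    gvec hmn A j (bIdx hmn i) = -(BN hmn A i j) := by
  have hi : ((bIdx hmn i : Fin n) : ℕ) < m := i.isLt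
  simp only [gvec, dif_pos hi]
  congr 1

lemma gvec_nIdx (j j' : Fin (n - m)) :
    gvec hmn A j (nIdx hmn j') = if j' = j then 1 else 0 := by
  have : ¬ ((nIdx hmn j' : Fin n) : ℕ) < m := by simp [nIdx_val]
  simp only [gvec, dif_neg this]
  by_cases hjj : j' = j
  · simp [hjj]
  · have : nIdx hmn j' ≠ nIdx hmn j := fun hc => hjj (nIdx_injective hmn hc)
    simp [hjj, this]

lemma redc_add (c₁ c₂ : Fin n → ℝ) (j : Fin (n - m)) :
    redc hmn A (c₁ + c₂) j = redc hmn A c₁ j + redc hmn A c₂ j := by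
  simp only [redc, Pi.add_apply, mul_add, Finset.sum_add_distrib]
  ring

lemma redc_eq_gvec_dot (dc : Fin n → ℝ) (j : Fin (n - m)) :
    redc hmn A dc j = gvec hmn A j ⬝ᵥ dc := by
  rw [redc, dotProduct_split hmn]
  have h1 : ∀ i : Fin m, gvec hmn A j (bIdx hmn i) * dc (bIdx hmn i)
      = -(BN hmn A i j * dc (bIdx hmn i)) := by
    intro i; rw [gvec_bIdx]; ring
  have h2 : (∑ j', gvec hmn A j (nIdx hmn j') * dc (nIdx hmn j')) = dc (nIdx hmn j) := by
    rw [Finset.sum_congr rfl (fun j' _ => by rw [gvec_nIdx])]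
    simp [ite_mul]
  rw [Finset.sum_congr rfl (fun i _ => h1 i), h2, Finset.sum_neg_distrib]
  ring

lemma gvec_sq_sum (j : Fin (n - m)) :
    ∑ k, (gvec hmn A j k) ^ 2 = (∑ i, (BN hmn A i j) ^ 2) + 1 := by
  rw [sum_split hmn]
  have h1 : ∀ i : Fin m, (gvec hmn A j (bIdx hmn i)) ^ 2 = (BN hmn A i j) ^ 2 := by
    intro i; rw [gvec_bIdx]; ring
  have h2 : (∑ j', (gvec hmn A j (nIdx hmn j')) ^ 2) = 1 := by
    rw [Finset.sum_congr rfl (fun j' _ => by rw [gvec_nIdx])]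
    simp [ite_pow]
  rw [Finset.sum_congr rfl (fun i _ => h1 i), h2]

end Aux4
section Aux5

variable {m n : ℕ} {hmn : m ≤ n} {A : Matrix (Fin m) (Fin n) ℝ}
variable {b : Fin m → ℝ} {c xstar : Fin n → ℝ} {ystar : Fin m → ℝ} {sstar : Fin n → ℝ}

lemma sstar_nIdx_pos (h : UniqueOpt hmn A b c xstar ystar sstar) (j : Fin (n - m)) :
    0 < sstar (nIdx hmn j) :=
  (h.sstar_supp (nIdx hmn j)).mpr (by simp [nIdx_val])

lemma xstar_bIdx_pos (h : UniqueOpt hmn A b c xstar ystar sstar) (i : Fin m) :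
    0 < xstar (bIdx hmn i) :=
  (h.xstar_supp (bIdx hmn i)).mpr i.isLt

/-- The key `ζ_p` computation. -/
lemma zetaP_formula (h : UniqueOpt hmn A b c xstar ystar sstar) (ω₁ : ℝ) (hω₁ : 0 < ω₁) :
    (⨆ j : Fin (n - m),
        Real.sqrt ((∑ i, (BN hmn A i j) ^ 2) + 1) / (ω₁ * sstar (nIdx hmn j)))
      = 1 / (ω₁ * zetaP hmn A b c) := by
  set B := Bmat hmn A with hBdef
  have hxBpos : ∀ i, 0 < (B⁻¹ *ᵥ b) i := by
    intro i
    rw [← congrFun (xstar_eq hmn A h) i]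
    exact xstar_bIdx_pos h i
  set S := {t | ∃ dc : Fin n → ℝ, t = enorm dc ∧ ¬ UniqueOptBasis hmn A b (c + dc)} with hSdef
  have hz : zetaP hmn A b c = sInf S := rfl
  set p : Fin (n - m) → ℝ := fun j => sstar (nIdx hmn j) with hpdef
  set q : Fin (n - m) → ℝ := fun j => Real.sqrt ((∑ i, (BN hmn A i j) ^ 2) + 1) with hqdef
  have hppos : ∀ j, 0 < p j := fun j => sstar_nIdx_pos h j
  have hqpos : ∀ j, 0 < q j := by
    intro j
    apply Real.sqrt_pos.mpr
    have : (0:ℝ) ≤ ∑ i, (BN hmn A i j) ^ 2 := Finset.sum_nonneg fun i _ => sq_nonneg _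
    linarith
  have hqsq : ∀ j, (q j) ^ 2 = (∑ i, (BN hmn A i j) ^ 2) + 1 := by
    intro j
    apply Real.sq_sqrt
    have : (0:ℝ) ≤ ∑ i, (BN hmn A i j) ^ 2 := Finset.sum_nonneg fun i _ => sq_nonneg _
    linarith
  rcases isEmpty_or_nonempty (Fin (n - m)) with hE | hNE
  · -- no nonbasic variables: the basis can never be destroyed by changing `c`
    have hSempty : S = ∅ := by
      ext t
      simp only [hSdef, Set.mem_setOf_eq, Set.mem_empty_iff_false, iff_false, not_exists]
      intro dc
      rintro ⟨-, hno⟩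
      exact hno ((uob_iff hmn A b (c + dc) h.rows_indep h.basis_isUnit).mpr
        ⟨hxBpos, fun j => hE.elim j⟩)
    rw [hz, hSempty, Real.sInf_empty, mul_zero, div_zero, Real.iSup_of_isEmpty]
  · -- there is a nonbasic variable
    obtain ⟨j₀, hj₀⟩ := Finite.exists_min (fun j => p j / q j)
    show (⨆ j, q j / (ω₁ * p j)) = 1 / (ω₁ * zetaP hmn A b c)
    -- the perturbation achieving the minimum distance
    have hmem : p j₀ / q j₀ ∈ S := by
      set t : ℝ := -(p j₀ / (q j₀) ^ 2) with htdef
      refine ⟨fun k => t * gvec hmn A j₀ k, ?_, ?_⟩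
      · rw [enorm_smul, htdef, abs_neg,
          abs_of_pos (div_pos (hppos j₀) (pow_pos (hqpos j₀) 2))]
        have : enorm (gvec hmn A j₀) = q j₀ := by
          rw [enorm, gvec_sq_sum, hqdef]
        rw [this, hqsq]
        have hq0 := hqpos j₀
        have hq2 : (q j₀) ^ 2 = (∑ i, (BN hmn A i j₀) ^ 2) + 1 := hqsq j₀
        rw [← hq2]
        field_simp
      · intro huob
        have hpos := ((uob_iff hmn A b _ h.rows_indep h.basis_isUnit).mp huob).2 j₀
        have hred : redc hmn A (c + fun k => t * gvec hmn A j₀ k) j₀ = 0 := by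
          rw [redc_add, redc_eq hmn A h]
          have : redc hmn A (fun k => t * gvec hmn A j₀ k) j₀
              = t * ((∑ i, (BN hmn A i j₀) ^ 2) + 1) := by
            rw [redc_eq_gvec_dot, ← gvec_sq_sum hmn A j₀]
            simp only [dotProduct]
            rw [Finset.mul_sum]
            exact Finset.sum_congr rfl fun k _ => by ring
          rw [this, ← hqsq, htdef, hpdef]
          have hq0 := (hqpos j₀).ne'
          field_simp
          ring
        rw [hred] at hpos
        exact lt_irrefl 0 hpos
    have hlb : ∀ t ∈ S, p j₀ / q j₀ ≤ t := by
      rintro t ⟨dc, rfl, hno⟩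
      have : ¬ (∀ j, 0 < redc hmn A (c + dc) j) := by
        intro hall
        exact hno ((uob_iff hmn A b (c + dc) h.rows_indep h.basis_isUnit).mpr
          ⟨hxBpos, hall⟩)
      push_neg at this
      obtain ⟨j, hj⟩ := this
      have hdot : gvec hmn A j ⬝ᵥ dc ≤ -(p j) := by
        rw [redc_add, redc_eq hmn A h, redc_eq_gvec_dot] at hj
        have hp : p j = sstar (nIdx hmn j) := rfl
        rw [hp]; linarith
      have hCS := Finset.sum_mul_sq_le_sq_mul_sq Finset.univ (gvec hmn A j) dc
      have hg2 : (∑ k, (gvec hmn A j k) ^ 2) = (q j) ^ 2 := by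
        rw [gvec_sq_sum, hqsq]
      have hd2 : (∑ k, (dc k) ^ 2) = (enorm dc) ^ 2 := (enorm_sq dc).symm
      have hsq : (p j) ^ 2 ≤ (q j * enorm dc) ^ 2 := by
        have h1 : (p j) ^ 2 ≤ (gvec hmn A j ⬝ᵥ dc) ^ 2 := by
          have hp0 := hppos j
          nlinarith
        calc (p j) ^ 2 ≤ (gvec hmn A j ⬝ᵥ dc) ^ 2 := h1
          _ ≤ (∑ k, (gvec hmn A j k) ^ 2) * ∑ k, (dc k) ^ 2 := hCS
          _ = (q j * enorm dc) ^ 2 := by rw [hg2, hd2]; ring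
      have hle : p j ≤ q j * enorm dc :=
        le_of_pow_le_pow_left₀ two_ne_zero
          (mul_nonneg (hqpos j).le (enorm_nonneg dc)) hsq
      have h3 : p j / q j ≤ enorm dc := by
        rw [div_le_iff₀ (hqpos j)]
        linarith [hle]
      exact le_trans (hj₀ j) h3
    have hzval : zetaP hmn A b c = p j₀ / q j₀ := by
      rw [hz]
      exact le_antisymm
        (csInf_le ⟨0, fun t ht => by
          obtain ⟨dc, rfl, -⟩ := ht
          exact enorm_nonneg dc⟩ hmem)
        (le_csInf ⟨_, hmem⟩ hlb)
    have hsup : (⨆ j : Fin (n - m), q j / (ω₁ * p j)) = q j₀ / (ω₁ * p j₀) := by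
      apply le_antisymm
      · apply ciSup_le
        intro j
        have hmin := hj₀ j
        rw [div_le_div_iff₀ (mul_pos hω₁ (hppos j)) (mul_pos hω₁ (hppos j₀))]
        rw [div_le_div_iff₀ (hqpos j₀) (hqpos j)] at hmin
        nlinarith [mul_le_mul_of_nonneg_left hmin hω₁.le, hppos j, hppos j₀, hqpos j, hqpos j₀]
      · exact le_ciSup (f := fun j => q j / (ω₁ * p j))
          (Set.Finite.bddAbove (Set.finite_range _)) j₀
    have hfinal : 1 / (ω₁ * (p j₀ / q j₀)) = q j₀ / (ω₁ * p j₀) := by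
      have hp0 := (hppos j₀).ne'
      have hq0 := (hqpos j₀).ne'
      field_simp
    rw [hzval, hfinal]
    exact hsup

end Aux5
section Aux6

variable {m n : ℕ} (hmn : m ≤ n) (A : Matrix (Fin m) (Fin n) ℝ)

lemma AAT_transpose : (A * Aᵀ)ᵀ = A * Aᵀ := by
  rw [Matrix.transpose_mul, Matrix.transpose_transpose]

lemma Minv_transpose : ((A * Aᵀ)⁻¹)ᵀ = (A * Aᵀ)⁻¹ := by
  rw [Matrix.transpose_nonsing_inv, AAT_transpose]

lemma Msym_dot (u v : Fin m → ℝ) :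
    u ⬝ᵥ ((A * Aᵀ)⁻¹ *ᵥ v) = v ⬝ᵥ ((A * Aᵀ)⁻¹ *ᵥ u) := by
  rw [Matrix.dotProduct_mulVec]
  have : u ᵥ* (A * Aᵀ)⁻¹ = (A * Aᵀ)⁻¹ *ᵥ u := by
    rw [← Minv_transpose A, Matrix.vecMul_transpose, Minv_transpose]
  rw [this, dotProduct_comm]

lemma quad_AAT (v : Fin m → ℝ) :
    v ⬝ᵥ ((A * Aᵀ) *ᵥ v) = (Aᵀ *ᵥ v) ⬝ᵥ (Aᵀ *ᵥ v) := by
  rw [← Matrix.mulVec_mulVec, dotProduct_comm, ← dot_At]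

lemma AAT_isUnit (hind : LinearIndependent ℝ (fun i => A i)) : IsUnit (A * Aᵀ).det := by
  rw [isUnit_iff_ne_zero]
  intro hdet
  obtain ⟨v, hv0, hv⟩ := Matrix.exists_mulVec_eq_zero_iff.mpr hdet
  have h2 : (Aᵀ *ᵥ v) ⬝ᵥ (Aᵀ *ᵥ v) = 0 := by
    rw [← quad_AAT, hv, dotProduct_zero]
  have h3 : Aᵀ *ᵥ v = 0 := dotProduct_self_eq_zero.mp h2
  have h4 : ∑ i, v i • A i = 0 := by
    funext k
    have := congrFun h3 k
    simpa [Matrix.mulVec, dotProduct, mul_comm, Finset.sum_apply] using this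
  have h5 := Fintype.linearIndependent_iff.mp hind v h4
  exact hv0 (funext h5)

lemma Mpsd (hU : IsUnit (A * Aᵀ).det) (v : Fin m → ℝ) :
    0 ≤ v ⬝ᵥ ((A * Aᵀ)⁻¹ *ᵥ v) := by
  have hvu : v = (A * Aᵀ) *ᵥ ((A * Aᵀ)⁻¹ *ᵥ v) := by
    rw [Matrix.mulVec_mulVec, Matrix.mul_nonsing_inv _ hU, Matrix.one_mulVec]
  calc (0:ℝ) ≤ (Aᵀ *ᵥ ((A * Aᵀ)⁻¹ *ᵥ v)) ⬝ᵥ (Aᵀ *ᵥ ((A * Aᵀ)⁻¹ *ᵥ v)) :=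
        Finset.sum_nonneg fun k _ => mul_self_nonneg _
    _ = ((A * Aᵀ)⁻¹ *ᵥ v) ⬝ᵥ ((A * Aᵀ) *ᵥ ((A * Aᵀ)⁻¹ *ᵥ v)) := (quad_AAT A _).symm
    _ = ((A * Aᵀ)⁻¹ *ᵥ v) ⬝ᵥ v := by rw [← hvu]
    _ = v ⬝ᵥ ((A * Aᵀ)⁻¹ *ᵥ v) := dotProduct_comm _ _

/-- Cauchy–Schwarz for the positive semidefinite form given by `(AAᵀ)⁻¹`. -/
lemma quadCS (hU : IsUnit (A * Aᵀ).det) (w d : Fin m → ℝ)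
    (ha : 0 < w ⬝ᵥ ((A * Aᵀ)⁻¹ *ᵥ w)) :
    (w ⬝ᵥ ((A * Aᵀ)⁻¹ *ᵥ d)) ^ 2
      ≤ (w ⬝ᵥ ((A * Aᵀ)⁻¹ *ᵥ w)) * (d ⬝ᵥ ((A * Aᵀ)⁻¹ *ᵥ d)) := by
  set M := (A * Aᵀ)⁻¹ with hM
  set a := w ⬝ᵥ (M *ᵥ w) with haa
  set bb := w ⬝ᵥ (M *ᵥ d) with hbb
  set cc := d ⬝ᵥ (M *ᵥ d) with hcc
  have hexp : ∀ t : ℝ, 0 ≤ t ^ 2 * a + 2 * t * bb + cc := by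
    intro t
    have h0 := Mpsd A hU (t • w + d)
    have hMv : M *ᵥ (t • w + d) = t • (M *ᵥ w) + M *ᵥ d := by
      rw [Matrix.mulVec_add, Matrix.mulVec_smul]
    rw [hMv] at h0
    have hexpand : (t • w + d) ⬝ᵥ (t • (M *ᵥ w) + M *ᵥ d)
        = t ^ 2 * a + 2 * t * bb + cc := by
      rw [add_dotProduct, dotProduct_add, dotProduct_add,
        smul_dotProduct, smul_dotProduct, dotProduct_smul,
        dotProduct_smul]
      have hsym : d ⬝ᵥ (M *ᵥ w) = bb := by rw [hbb, hM, Msym_dot]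
      rw [hsym]
      simp only [smul_eq_mul, haa, hbb, hcc]
      ring
    rw [hexpand] at h0
    exact h0
  have hkey := hexp (-(bb / a))
  have ha' : a ≠ 0 := ha.ne'
  have h1 : (-(bb / a)) ^ 2 * a + 2 * (-(bb / a)) * bb + cc = cc - bb ^ 2 / a := by
    field_simp
    ring
  rw [h1] at hkey
  have h2 : bb ^ 2 / a ≤ cc := by linarith
  rw [div_le_iff₀ ha] at h2
  nlinarith [h2]

end Aux6
section Aux7

variable {m n : ℕ} (hmn : m ≤ n) (A : Matrix (Fin m) (Fin n) ℝ)

lemma BinvA_col_b (hB : IsUnit (Bmat hmn A).det) (i i' : Fin m) :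
    ((Bmat hmn A)⁻¹ * A) i (bIdx hmn i') = if i = i' then 1 else 0 := by
  have h1 : ((Bmat hmn A)⁻¹ * A) i (bIdx hmn i') = ((Bmat hmn A)⁻¹ * Bmat hmn A) i i' := by
    rw [Matrix.mul_apply, Matrix.mul_apply]
    exact Finset.sum_congr rfl fun t _ => rfl
  rw [h1, Binv_mul_B hmn A hB, Matrix.one_apply]

lemma BinvA_col_n (i : Fin m) (j : Fin (n - m)) :
    ((Bmat hmn A)⁻¹ * A) i (nIdx hmn j) = BN hmn A i j := by
  rw [BN, Matrix.mul_apply, Matrix.mul_apply]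
  exact Finset.sum_congr rfl fun t _ => rfl

lemma hrow_normsq (hB : IsUnit (Bmat hmn A).det) (i : Fin m) :
    (Aᵀ *ᵥ (fun k => (Bmat hmn A)⁻¹ i k)) ⬝ᵥ (Aᵀ *ᵥ (fun k => (Bmat hmn A)⁻¹ i k))
      = (∑ j, (BN hmn A i j) ^ 2) + 1 := by
  have heval : ∀ k, (Aᵀ *ᵥ (fun k' => (Bmat hmn A)⁻¹ i k')) k
      = ((Bmat hmn A)⁻¹ * A) i k := by
    intro k
    rw [Matrix.mul_apply, Matrix.mulVec]
    unfold dotProduct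
    exact Finset.sum_congr rfl fun t _ => by simp [Matrix.transpose_apply]; ring
  unfold dotProduct
  rw [Finset.sum_congr rfl fun k _ => by rw [heval k, ← sq]]
  rw [sum_split hmn]
  have h1 : (∑ i', (((Bmat hmn A)⁻¹ * A) i (bIdx hmn i')) ^ 2) = 1 := by
    rw [Finset.sum_congr rfl fun i' _ => by rw [BinvA_col_b hmn A hB i i']]
    simp [ite_pow]
  have h2 : (∑ j, (((Bmat hmn A)⁻¹ * A) i (nIdx hmn j)) ^ 2)
      = ∑ j, (BN hmn A i j) ^ 2 := by
    exact Finset.sum_congr rfl fun j _ => by rw [BinvA_col_n]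
  rw [h1, h2]
  ring

variable {b : Fin m → ℝ} {c xstar : Fin n → ℝ} {ystar : Fin m → ℝ} {sstar : Fin n → ℝ}

/-- The key `ζ_d` computation. -/
lemma zetaD_formula {hmn : m ≤ n} {A : Matrix (Fin m) (Fin n) ℝ}
    (h : UniqueOpt hmn A b c xstar ystar sstar) (ω₂ : ℝ) (hω₂ : 0 < ω₂) :
    (⨆ i : Fin m,
        Real.sqrt ((∑ j, (BN hmn A i j) ^ 2) + 1) / (ω₂ * xstar (bIdx hmn i)))
      = 1 / (ω₂ * zetaD hmn A b c) := by
  have hB := h.basis_isUnit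
  have hU : IsUnit (A * Aᵀ).det := AAT_isUnit A h.rows_indep
  have hredc : ∀ j, 0 < redc hmn A c j := by
    intro j
    rw [redc_eq hmn A h]
    exact sstar_nIdx_pos h j
  set M := (A * Aᵀ)⁻¹ with hM
  set S := {t | ∃ db : Fin m → ℝ, t = Real.sqrt (db ⬝ᵥ (M *ᵥ db)) ∧
    ¬ UniqueOptBasis hmn A (b + db) c} with hSdef
  have hz : zetaD hmn A b c = sInf S := rfl
  set p : Fin m → ℝ := fun i => xstar (bIdx hmn i) with hpdef
  set q : Fin m → ℝ := fun i => Real.sqrt ((∑ j, (BN hmn A i j) ^ 2) + 1) with hqdef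
  have hppos : ∀ i, 0 < p i := fun i => xstar_bIdx_pos h i
  have hqpos : ∀ i, 0 < q i := by
    intro i
    apply Real.sqrt_pos.mpr
    have : (0:ℝ) ≤ ∑ j, (BN hmn A i j) ^ 2 := Finset.sum_nonneg fun j _ => sq_nonneg _
    linarith
  have hqsq : ∀ i, (q i) ^ 2 = (∑ j, (BN hmn A i j) ^ 2) + 1 := by
    intro i
    apply Real.sq_sqrt
    have : (0:ℝ) ≤ ∑ j, (BN hmn A i j) ^ 2 := Finset.sum_nonneg fun j _ => sq_nonneg _
    linarith
  -- basic-part of the perturbed solution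
  have hxb : (fun i => xstar (bIdx hmn i)) = (Bmat hmn A)⁻¹ *ᵥ b := xstar_eq hmn A h
  set hrow : Fin m → Fin m → ℝ := fun i => fun k => (Bmat hmn A)⁻¹ i k with hhrow
  set w : Fin m → Fin m → ℝ := fun i => (A * Aᵀ) *ᵥ hrow i with hwdef
  have hMw : ∀ i, M *ᵥ w i = hrow i := by
    intro i
    rw [hwdef, hM, Matrix.mulVec_mulVec, Matrix.nonsing_inv_mul _ hU, Matrix.one_mulVec]
  have hwa : ∀ i, w i ⬝ᵥ (M *ᵥ w i) = (q i) ^ 2 := by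
    intro i
    rw [hMw i, hwdef, dotProduct_comm, quad_AAT, hrow_normsq hmn A hB, hqsq]
  have hrow_dot : ∀ (i : Fin m) (db : Fin m → ℝ),
      ((Bmat hmn A)⁻¹ *ᵥ db) i = w i ⬝ᵥ (M *ᵥ db) := by
    intro i db
    have h1 : ((Bmat hmn A)⁻¹ *ᵥ db) i = hrow i ⬝ᵥ db := rfl
    rw [h1, ← hMw i, dotProduct_comm, Msym_dot]
  have hBb : ∀ (db : Fin m → ℝ) (i : Fin m),
      ((Bmat hmn A)⁻¹ *ᵥ (b + db)) i = p i + w i ⬝ᵥ (M *ᵥ db) := by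
    intro db i
    rw [Matrix.mulVec_add, Pi.add_apply, ← hrow_dot, hpdef]
    have := congrFun hxb i
    simp only [this]
  rcases isEmpty_or_nonempty (Fin m) with hE | hNE
  · have hSempty : S = ∅ := by
      ext t
      simp only [hSdef, Set.mem_setOf_eq, Set.mem_empty_iff_false, iff_false, not_exists]
      intro db
      rintro ⟨-, hno⟩
      exact hno ((uob_iff hmn A (b + db) c h.rows_indep hB).mpr
        ⟨fun i => hE.elim i, hredc⟩)
    rw [hz, hSempty, Real.sInf_empty, mul_zero, div_zero, Real.iSup_of_isEmpty]
  · obtain ⟨i₀, hi₀⟩ := Finite.exists_min (fun i => p i / q i)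
    show (⨆ i, q i / (ω₂ * p i)) = 1 / (ω₂ * zetaD hmn A b c)
    have hmem : p i₀ / q i₀ ∈ S := by
      set tt : ℝ := -(p i₀ / (q i₀) ^ 2) with httdef
      refine ⟨tt • w i₀, ?_, ?_⟩
      · have hdd : (tt • w i₀) ⬝ᵥ (M *ᵥ (tt • w i₀)) = (tt * q i₀) ^ 2 := by
          rw [Matrix.mulVec_smul, smul_dotProduct, dotProduct_smul,
            smul_eq_mul, smul_eq_mul, hwa i₀]
          ring
        rw [hdd, Real.sqrt_sq_eq_abs, abs_mul, abs_of_pos (hqpos i₀), httdef, abs_neg,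
          abs_of_pos (div_pos (hppos i₀) (pow_pos (hqpos i₀) 2))]
        have hq0 := (hqpos i₀).ne'
        field_simp
      · intro huob
        have hpos := ((uob_iff hmn A _ c h.rows_indep hB).mp huob).1 i₀
        have hval : ((Bmat hmn A)⁻¹ *ᵥ (b + tt • w i₀)) i₀ = 0 := by
          rw [hBb]
          have : w i₀ ⬝ᵥ (M *ᵥ (tt • w i₀)) = tt * (q i₀) ^ 2 := by
            rw [Matrix.mulVec_smul, dotProduct_smul, smul_eq_mul, hwa i₀]
          rw [this, httdef]
          have hq0 := (hqpos i₀).ne'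
          field_simp
          ring
        rw [hval] at hpos
        exact lt_irrefl 0 hpos
    have hlb : ∀ t ∈ S, p i₀ / q i₀ ≤ t := by
      rintro t ⟨db, rfl, hno⟩
      have : ¬ (∀ i, 0 < ((Bmat hmn A)⁻¹ *ᵥ (b + db)) i) := by
        intro hall
        exact hno ((uob_iff hmn A (b + db) c h.rows_indep hB).mpr ⟨hall, hredc⟩)
      push_neg at this
      obtain ⟨i, hi⟩ := this
      rw [hBb] at hi
      have hdot : w i ⬝ᵥ (M *ᵥ db) ≤ -(p i) := by linarith
      have hcc : 0 ≤ db ⬝ᵥ (M *ᵥ db) := Mpsd A hU db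
      have hCS := quadCS A hU (w i) db (by rw [hwa i]; positivity)
      rw [hwa i] at hCS
      have ht2 : (Real.sqrt (db ⬝ᵥ (M *ᵥ db))) ^ 2 = db ⬝ᵥ (M *ᵥ db) := Real.sq_sqrt hcc
      have hsq : (p i) ^ 2 ≤ (q i * Real.sqrt (db ⬝ᵥ (M *ᵥ db))) ^ 2 := by
        have h1 : (p i) ^ 2 ≤ (w i ⬝ᵥ (M *ᵥ db)) ^ 2 := by
          have hp0 := hppos i
          nlinarith
        calc (p i) ^ 2 ≤ (w i ⬝ᵥ (M *ᵥ db)) ^ 2 := h1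
          _ ≤ (q i) ^ 2 * (db ⬝ᵥ (M *ᵥ db)) := hCS
          _ = (q i * Real.sqrt (db ⬝ᵥ (M *ᵥ db))) ^ 2 := by rw [mul_pow, ht2]
      have hle : p i ≤ q i * Real.sqrt (db ⬝ᵥ (M *ᵥ db)) :=
        le_of_pow_le_pow_left₀ two_ne_zero
          (mul_nonneg (hqpos i).le (Real.sqrt_nonneg _)) hsq
      have h3 : p i / q i ≤ Real.sqrt (db ⬝ᵥ (M *ᵥ db)) := by
        rw [div_le_iff₀ (hqpos i)]
        linarith
      exact le_trans (hi₀ i) h3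
    have hzval : zetaD hmn A b c = p i₀ / q i₀ := by
      rw [hz]
      exact le_antisymm
        (csInf_le ⟨0, fun t ht => by
          obtain ⟨db, rfl, -⟩ := ht
          exact Real.sqrt_nonneg _⟩ hmem)
        (le_csInf ⟨_, hmem⟩ hlb)
    have hsup : (⨆ i : Fin m, q i / (ω₂ * p i)) = q i₀ / (ω₂ * p i₀) := by
      apply le_antisymm
      · apply ciSup_le
        intro i
        have hmin := hi₀ i
        rw [div_le_div_iff₀ (mul_pos hω₂ (hppos i)) (mul_pos hω₂ (hppos i₀))]
        rw [div_le_div_iff₀ (hqpos i₀) (hqpos i)] at hmin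
        nlinarith [mul_le_mul_of_nonneg_left hmin hω₂.le, hppos i, hppos i₀, hqpos i,
          hqpos i₀]
      · exact le_ciSup (f := fun i => q i / (ω₂ * p i))
          (Set.Finite.bddAbove (Set.finite_range _)) i₀
    have hfinal : 1 / (ω₂ * (p i₀ / q i₀)) = q i₀ / (ω₂ * p i₀) := by
      have hp0 := (hppos i₀).ne'
      have hq0 := (hqpos i₀).ne'
      field_simp
    rw [hzval, hfinal]
    exact hsup

end Aux7
section Aux8

lemma l1_smul {k : ℕ} (t : ℝ) (ht : 0 ≤ t) (v : Fin k → ℝ) : l1 (t • v) = t * l1 v := by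
  unfold l1
  rw [Finset.mul_sum]
  exact Finset.sum_congr rfl fun i _ => by
    rw [Pi.smul_apply, smul_eq_mul, abs_mul, abs_of_nonneg ht]

end Aux8

/-- equation (40) in the paper. Under the unique-optimum assumption,
for any reweights `ω₁, ω₂ > 0`, the condition number of the reweighted LP
`min (ω₁c)ᵀx s.t. Ax = ω₂b, x ≥ 0` (whose unique primal/dual-slack optima are `ω₂x*` and
`ω₁s*`, with the same optimal basis) satisfies
`Φ_{ω₁,ω₂} = (ω₂‖x*‖₁ + ω₁‖s*‖₁) · max{1/(ω₁ζ_p), 1/(ω₂ζ_d)}`. -/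
theorem reweighted_phi_formula (m n : ℕ) (hmn : m ≤ n)
    (A : Matrix (Fin m) (Fin n) ℝ) (b : Fin m → ℝ) (c : Fin n → ℝ)
    (xstar : Fin n → ℝ) (ystar : Fin m → ℝ) (sstar : Fin n → ℝ)
    (h : UniqueOpt hmn A b c xstar ystar sstar)
    (ω₁ ω₂ : ℝ) (hω₁ : 0 < ω₁) (hω₂ : 0 < ω₂) :
    Phi hmn A (ω₂ • xstar) (ω₁ • sstar) =
      (ω₂ * l1 xstar + ω₁ * l1 sstar) *
        max (1 / (ω₁ * zetaP hmn A b c)) (1 / (ω₂ * zetaD hmn A b c)) := by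
  have hP := zetaP_formula h ω₁ hω₁
  have hD := zetaD_formula h ω₂ hω₂
  have e1 : (⨆ j : Fin (n - m),
      Real.sqrt ((∑ i, (BN hmn A i j) ^ 2) + 1) / ((ω₁ • sstar) (nIdx hmn j)))
      = 1 / (ω₁ * zetaP hmn A b c) := by
    rw [← hP]
    exact iSup_congr fun j => by rw [Pi.smul_apply, smul_eq_mul]
  have e2 : (⨆ i : Fin m,
      Real.sqrt ((∑ j, (BN hmn A i j) ^ 2) + 1) / ((ω₂ • xstar) (bIdx hmn i)))
      = 1 / (ω₂ * zetaD hmn A b c) := by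
    rw [← hD]
    exact iSup_congr fun i => by rw [Pi.smul_apply, smul_eq_mul]
  rw [Phi, PhiFactor, e1, e2, l1_smul ω₂ hω₂.le, l1_smul ω₁ hω₁.le]

end LPPaper
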